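/- Let $\kappa>0$, $f_{low}\in\mathbb{R}$, and let $(f_k)$, $(g_k)$, $(\nu_k)$ be real sequences with $\nu_k \ge 0$, $f_k \ge f_{low}$, $\kappa g_k^2 \le f_k - f_{k+1} + \nu_k$ for all $k$, and such that for every $\delta>0$ there exists $N$ with $\nu_k \le \delta g_k^2$ for all $k \ge N$. Then $\lim_{k\to\infty} g_k = 0$. -/

import Mathlib

theorem lim_grad_zero (κ flow : ℝ) (hκ : 0 < κ)
    (f g ν : ℕ → ℝ) (hν : ∀ k, 0 ≤ ν k) (hflow : ∀ k, flow ≤ f k)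
    (hdesc : ∀ k, κ * g k ^ 2 ≤ f k - f (k + 1) + ν k)
    (hlittleo : ∀ δ > (0 : ℝ), ∃ N : ℕ, ∀ k, N ≤ k → ν k ≤ δ * g k ^ 2) :
    Filter.Tendsto g Filter.atTop (nhds 0) := by
  obtain ⟨N, hN⟩ := hlittleo (κ/2) (by linarith)
  -- for k ≥ N, (κ/2) g k ^2 ≤ f k - f (k+1)
  have key : ∀ k, N ≤ k → (κ/2) * g k ^ 2 ≤ f k - f (k+1) := by
    intro k hk
    have h1 := hdesc k
    have h2 := hN k hk
    linarith
  -- partial sums bounded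
  have hsum : ∀ n, ∑ i ∈ Finset.range n, (κ/2) * g (N + i) ^ 2 ≤ f N - flow := by
    intro n
    have : ∑ i ∈ Finset.range n, (κ/2) * g (N + i) ^ 2 ≤ f N - f (N + n) := by
      induction n with
      | zero => simp
      | succ n ih =>
        rw [Finset.sum_range_succ]
        have := key (N + n) (Nat.le_add_right _ _)
        have : (κ/2) * g (N + n) ^ 2 ≤ f (N + n) - f (N + n + 1) := this
        have hra : N + (n+1) = N + n + 1 := by ring
        rw [hra]
        linarith
    have := hflow (N + n)
    linarith
  have hnn : ∀ i, 0 ≤ (κ/2) * g (N + i) ^ 2 := fun i =>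
    mul_nonneg (by linarith) (sq_nonneg _)
  have hsummable : Summable (fun i => (κ/2) * g (N + i) ^ 2) :=
    summable_of_sum_range_le hnn hsum
  have htend : Filter.Tendsto (fun i => (κ/2) * g (N + i) ^ 2) Filter.atTop (nhds 0) :=
    hsummable.tendsto_atTop_zero
  have htend2 : Filter.Tendsto (fun i => g (N + i) ^ 2) Filter.atTop (nhds 0) := by
    have := htend.const_mul (2/κ)
    simp only [mul_zero] at this
    convert this using 2 with i
    field_simp
  have htend3 : Filter.Tendsto (fun k => g k ^ 2) Filter.atTop (nhds 0) := by
    rw [← Filter.tendsto_add_atTop_iff_nat N]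
    convert htend2 using 2 with i
    ring_nf
  -- conclude g → 0 via sqrt
  have habs : Filter.Tendsto (fun k => |g k|) Filter.atTop (nhds 0) := by
    have : Filter.Tendsto (fun k => Real.sqrt (g k ^ 2)) Filter.atTop (nhds 0) := by
      have := (Real.continuous_sqrt.tendsto 0).comp htend3
      simpa [Function.comp_def] using this
    simpa [Real.sqrt_sq_eq_abs] using this
  exact (tendsto_zero_iff_abs_tendsto_zero g).mpr habs
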